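/- Let G* be an MPDAG with B-components over vertex sets V₁,…,Vₖ. For every DAG G ∈ [G*] and every i, the induced subgraph of G over Vᵢ belongs to the restricted equivalence class of the i-th B-component. -/

import Mathlib

/-! ## Basic notions for directed graphs (DAGs) given by an edge relation `E`. -/

/-- A directed graph (edge relation `E`) is acyclic: no directed cycles. -/
def Acyclic {V : Type*} (E : V → V → Prop) : Prop := ∀ x, ¬ Relation.TransGen E x x

/-- Two nodes are adjacent if there is an edge between them in either direction. -/
def adjD {V : Type*} (E : V → V → Prop) (a b : V) : Prop := E a b ∨ E b a

/-- `p` is a path (in the skeleton) from `X` to `Y`: consecutive nodes are adjacent and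
nodes are pairwise distinct. -/
def IsPath {V : Type*} (E : V → V → Prop) (p : List V) (X Y : V) : Prop :=
  p.head? = some X ∧ p.getLast? = some Y ∧ p.Chain' (adjD E) ∧ p.Nodup

/-- A path is d-connecting (open) given `S` if every collider on it is an ancestor
of some node of `S` and no non-collider on it lies in `S`. -/
def dConnecting {V : Type*} (E : V → V → Prop) (S : Set V) (p : List V) : Prop :=
  ∀ (i : ℕ) a b c, p[i]? = some a → p[i+1]? = some b → p[i+2]? = some c →
    ((E a b ∧ E c b) → ∃ s ∈ S, Relation.ReflTransGen E b s) ∧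
    (¬ (E a b ∧ E c b) → b ∉ S)

/-- `X` and `Y` are d-separated by `S` if every path between them is blocked by `S`. -/
def dSeparated {V : Type*} (E : V → V → Prop) (S : Set V) (X Y : V) : Prop :=
  ∀ p : List V, IsPath E p X Y → ¬ dConnecting E S p

/-- A v-structure `a → b ← c` with `a`, `c` non-adjacent. -/
def vStructD {V : Type*} (E : V → V → Prop) (a b c : V) : Prop :=
  E a b ∧ E c b ∧ a ≠ c ∧ ¬ adjD E a c

/-! ## Partially directed graphs (PDAGs / MPDAGs). -/

/-- A partially directed graph: directed edges `dir` and undirected edges `undir`. -/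
structure PDAG (V : Type*) where
  dir : V → V → Prop
  undir : V → V → Prop
  undir_symm : ∀ a b, undir a b → undir b a
  dir_asymm : ∀ a b, dir a b → ¬ dir b a
  disj : ∀ a b, undir a b → ¬ dir a b

namespace PDAG

variable {V : Type*} (G : PDAG V)

/-- Adjacency in a partially directed graph. -/
def adj (a b : V) : Prop := G.dir a b ∨ G.dir b a ∨ G.undir a b

/-- A v-structure `a → b ← c` in a PDAG, with `a, c` non-adjacent. -/
def vStruct (a b c : V) : Prop := G.dir a b ∧ G.dir c b ∧ a ≠ c ∧ ¬ G.adj a c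

/-- Parents of `X`. -/
def pa (X : V) : Set V := {z | G.dir z X}

/-- Children of `X`. -/
def ch (X : V) : Set V := {z | G.dir X z}

/-- Siblings (undirected neighbours) of `X`. -/
def sib (X : V) : Set V := {z | G.undir X z}

/-- A DAG `E` is represented by the (M)PDAG `G` (i.e. `E ∈ [G]`): it is acyclic,
has the same skeleton and the same v-structures as `G`, and preserves every
directed edge of `G`. -/
def Represents (E : V → V → Prop) : Prop :=
  Acyclic E ∧ (∀ a b, adjD E a b ↔ G.adj a b) ∧
  (∀ a b, G.dir a b → E a b) ∧
  (∀ a b c, vStructD E a b c ↔ G.vStruct a b c)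

/-- `G` is an MPDAG: its represented class is non-empty, an edge is directed in
`G` iff it has that orientation in all DAGs of the class, and every undirected
edge takes both orientations across the class. -/
def IsMPDAG : Prop :=
  (∃ E, G.Represents E) ∧
  (∀ a b, G.dir a b ↔ (G.adj a b ∧ ∀ E, G.Represents E → E a b)) ∧
  (∀ a b, G.undir a b → ∃ E, G.Represents E ∧ E a b)

/-- Induced sub-PDAG on a vertex set `W`. -/
def induce (W : Set V) : PDAG V where
  dir a b := a ∈ W ∧ b ∈ W ∧ G.dir a b
  undir a b := a ∈ W ∧ b ∈ W ∧ G.undir a b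
  undir_symm a b h := ⟨h.2.1, h.1, G.undir_symm a b h.2.2⟩
  dir_asymm a b h hb := G.dir_asymm a b h.2.2 hb.2.2
  disj a b h hd := G.disj a b h.2.2 hd.2.2

end PDAG

/-- A path in a PDAG: consecutive nodes adjacent, pairwise distinct nodes. -/
def IsPDAGPath {V : Type*} (G : PDAG V) (p : List V) (X Y : V) : Prop :=
  p.head? = some X ∧ p.getLast? = some Y ∧ p.Chain' G.adj ∧ p.Nodup

/-- A path is b-possibly causal: no edge `V_j → V_i` in `G` for `i < j` along it. -/
def bPossiblyCausal {V : Type*} (G : PDAG V) (p : List V) : Prop :=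
  ∀ (i j : ℕ) a b, i < j → p[i]? = some a → p[j]? = some b → ¬ G.dir b a

/-- A path is chordless: non-consecutive nodes are non-adjacent. -/
def Chordless {V : Type*} (G : PDAG V) (p : List V) : Prop :=
  ∀ (i j : ℕ) a b, i + 1 < j → p[i]? = some a → p[j]? = some b → ¬ G.adj a b

/-- Critical set of `X` with respect to `Y` in `G`: the adjacent vertices of `X`
lying on some chordless b-possibly causal path from `X` to `Y`. -/
def criticalSet {V : Type*} (G : PDAG V) (X Y : V) : Set V :=
  {c | ∃ p : List V, IsPDAGPath G p X Y ∧ bPossiblyCausal G p ∧ Chordless G p ∧ p[1]? = some c}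

/-- A DAG extension of `G`: acyclic, same skeleton, all directed edges of `G`
kept, and no v-structures beyond those of `G`. -/
def ExtendsNoNewV {V : Type*} (G : PDAG V) (E : V → V → Prop) : Prop :=
  Acyclic E ∧ (∀ a b, adjD E a b ↔ G.adj a b) ∧
  (∀ a b, G.dir a b → E a b) ∧
  (∀ a b c, vStructD E a b c → G.vStruct a b c)

/-- An acyclic orientation of `G` extending its directed edges. -/
def ExtendsDir {V : Type*} (G : PDAG V) (E : V → V → Prop) : Prop :=
  Acyclic E ∧ (∀ a b, adjD E a b ↔ G.adj a b) ∧ (∀ a b, G.dir a b → E a b)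

/-- `W` is (the vertex set of) a B-component of `G`: an equivalence class of the
undirected-connectivity relation. -/
def IsBComponent {V : Type*} (G : PDAG V) (W : Set V) : Prop :=
  ∃ a, W = {b | Relation.ReflTransGen G.undir a b}

/-- Every non-endpoint node of `p` is of definite status in `M`: a definite
collider or a definite non-collider. -/
def DefiniteStatus {V : Type*} (M : PDAG V) (p : List V) : Prop :=
  ∀ (i : ℕ) a b c, p[i]? = some a → p[i+1]? = some b → p[i+2]? = some c →
    (M.dir a b ∧ M.dir c b) ∨ M.dir b a ∨ M.dir b c ∨
    (M.undir a b ∧ M.undir b c ∧ ¬ M.adj a c)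

/-- for every DAG `E ∈ [G*]` and every B-component of `G*` with vertex
set `W i`, the induced subgraph of `E` over `W i` belongs to the restricted equivalence
class of that B-component. -/
theorem stmt14 {V : Type*} {ι : Type*} (G : PDAG V) (hG : G.IsMPDAG)
    (W : ι → Set V) (hcomp : ∀ i, IsBComponent G (W i))
    (hpart : ∀ v, ∃! i, v ∈ W i)
    (E : V → V → Prop) (hE : G.Represents E) (i : ι) :
    (G.induce (W i)).Represents (fun a b => a ∈ W i ∧ b ∈ W i ∧ E a b) := by
  obtain ⟨hac, hskel, hdir, hv⟩ := hE
  have hnot2 : ∀ a b, E a b → E b a → False := fun a b h1 h2 =>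
    hac a (Relation.TransGen.head h1 (Relation.TransGen.single h2))
  refine ⟨?_, ?_, ?_, ?_⟩
  · intro x hx
    exact hac x (Relation.TransGen.mono (p := E) (fun a b (h : a ∈ W i ∧ b ∈ W i ∧ E a b) => h.2.2) x x hx)
  · intro a b
    constructor
    · rintro (⟨ha, hb, hab⟩ | ⟨hb, ha, hba⟩)
      · rcases (hskel a b).mp (Or.inl hab) with h | h | h
        · exact Or.inl ⟨ha, hb, h⟩
        · exact absurd (hdir b a h) (fun h2 => hnot2 a b hab h2)
        · exact Or.inr (Or.inr ⟨ha, hb, h⟩)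
      · rcases (hskel a b).mp (Or.inr hba) with h | h | h
        · exact absurd (hdir a b h) (fun h2 => hnot2 b a hba h2)
        · exact Or.inr (Or.inl ⟨hb, ha, h⟩)
        · exact Or.inr (Or.inr ⟨ha, hb, h⟩)
    · rintro (⟨ha, hb, h⟩ | ⟨hb, ha, h⟩ | ⟨ha, hb, h⟩)
      · exact Or.inl ⟨ha, hb, hdir a b h⟩
      · exact Or.inr ⟨hb, ha, hdir b a h⟩
      · rcases (hskel a b).mpr (Or.inr (Or.inr h)) with h' | h'
        · exact Or.inl ⟨ha, hb, h'⟩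
        · exact Or.inr ⟨hb, ha, h'⟩
  · rintro a b ⟨ha, hb, h⟩
    exact ⟨ha, hb, hdir a b h⟩
  · intro a b c
    constructor
    · rintro ⟨⟨ha, hb, hab⟩, ⟨hc, hb', hcb⟩, hne, hnadj⟩
      have hnadjE : ¬ adjD E a c := by
        rintro (h | h)
        · exact hnadj (Or.inl ⟨ha, hc, h⟩)
        · exact hnadj (Or.inr ⟨hc, ha, h⟩)
      have hvE : G.vStruct a b c :=
        (hv a b c).mp ⟨hab, hcb, hne, hnadjE⟩
      refine ⟨⟨ha, hb, hvE.1⟩, ⟨hc, hb, hvE.2.1⟩, hne, ?_⟩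
      rintro (⟨_,_,h⟩ | ⟨_,_,h⟩ | ⟨_,_,h⟩)
      · exact hvE.2.2.2 (Or.inl h)
      · exact hvE.2.2.2 (Or.inr (Or.inl h))
      · exact hvE.2.2.2 (Or.inr (Or.inr h))
    · rintro ⟨⟨ha, hb, hab⟩, ⟨hc, hb', hcb⟩, hne, hnadj⟩
      refine ⟨⟨ha, hb, hdir a b hab⟩, ⟨hc, hb, hdir c b hcb⟩, hne, ?_⟩
      have hG : ∀ h : G.adj a c, False := by
        rintro (h' | h' | h')
        · exact hnadj (Or.inl ⟨ha, hc, h'⟩)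
        · exact hnadj (Or.inr (Or.inl ⟨hc, ha, h'⟩))
        · exact hnadj (Or.inr (Or.inr ⟨ha, hc, h'⟩))
      rintro (⟨_,_,h⟩ | ⟨_,_,h⟩)
      · exact hG ((hskel a c).mp (Or.inl h))
      · exact hG ((hskel a c).mp (Or.inr h))
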